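/- Let E be a real inner product space, α > 0, and let Ω ⊆ E be a nonempty compact α-strongly convex set of diameter at most D (i.e., ‖u − v‖ ≤ D for all u, v ∈ Ω). Let f : E → ℝ be convex, differentiable with gradient ∇f, and L-smooth (L > 0). Define the Primal Averaging iterates with option (B): w_0 = v_0 ∈ Ω; for t ≥ 1, γ_t = 2/(t+1), z_{t−1} = (1−γ_t)w_{t−1} + γ_t v_{t−1}, v_t ∈ Ω with ⟨∇f(z_{t−1}), v_t⟩ ≤ ⟨∇f(z_{t−1}), u⟩ for all u ∈ Ω, and w_t = (1−γ_t)w_{t−1} + γ_t v_t. If there is c > 0 with ‖∇f(z_t)‖ ≥ c for all t ≥ 0, then for every w* ∈ Ω and every t ≥ 1, f(w_t) − f(w*) ≤ (2L/(t(t+1)))·D²·( 1 + 36L²/(α²c²) ). -/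

import Mathlib

open RealInnerProductSpace

/-- A set `Ω` in a real inner product space is `α`-strongly convex if for all `u, v ∈ Ω`
and all `θ ∈ [0,1]`, every point at distance at most `θ(1−θ)(α/2)‖u−v‖²` from
`θ•u + (1−θ)•v` belongs to `Ω`. -/
def StronglyConvexSet {E : Type*} [NormedAddCommGroup E] [InnerProductSpace ℝ E]
    (α : ℝ) (Ω : Set E) : Prop :=
  ∀ u ∈ Ω, ∀ v ∈ Ω, ∀ θ : ℝ, θ ∈ Set.Icc (0 : ℝ) 1 → ∀ y : E,
    ‖y - (θ • u + (1 - θ) • v)‖ ≤ θ * (1 - θ) * (α / 2) * ‖u - v‖ ^ 2 → y ∈ Ω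

lemma grad_ineq {E : Type*} [NormedAddCommGroup E] [InnerProductSpace ℝ E]
    (f : E → ℝ) (f' : E → E) {L : ℝ} (hL : 0 < L)
    (hconv : ConvexOn ℝ Set.univ f)
    (hsmooth : ∀ x y : E, |f x - f y - ⟪f' y, x - y⟫| ≤ L / 2 * ‖x - y‖ ^ 2)
    (x u : E) : f x + ⟪f' x, u - x⟫ ≤ f u := by
  have hN : (0:ℝ) ≤ ‖u - x‖^2 := by positivity
  refine le_of_forall_pos_le_add fun ε hε => ?_
  set N := ‖u - x‖^2 with hNdef
  have hden : (0:ℝ) < L*N+1 := by positivity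
  set θ : ℝ := min 1 (2*ε/(L*N+1)) with hθdef
  have hθpos : 0 < θ := lt_min one_pos (by positivity)
  have hθ1 : θ ≤ 1 := min_le_left _ _
  have hθle : θ ≤ 2*ε/(L*N+1) := min_le_right _ _
  have hcvx := hconv.2 (Set.mem_univ x) (Set.mem_univ u)
    (show (0:ℝ) ≤ 1-θ by linarith) hθpos.le (by ring : (1-θ)+θ = 1)
  have hpt : (1-θ) • x + θ • u = x + θ • (u - x) := by module
  rw [hpt] at hcvx
  have hsm := hsmooth (x + θ • (u - x)) x
  have h1 : (x + θ • (u - x)) - x = θ • (u - x) := by abel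
  rw [h1, real_inner_smul_right] at hsm
  have h2 : ‖θ • (u - x)‖^2 = θ^2 * N := by
    rw [norm_smul, Real.norm_eq_abs, abs_of_pos hθpos, mul_pow, hNdef]
  rw [h2] at hsm
  have hlow : f x + θ * ⟪f' x, u - x⟫ - L/2 * (θ^2*N) ≤ f (x + θ • (u - x)) := by
    have := (abs_le.mp hsm).1
    linarith
  have hcomb : θ * ⟪f' x, u - x⟫ ≤ θ * ((f u - f x) + L/2 * θ * N) := by
    have h3 := hlow.trans hcvx
    simp only [smul_eq_mul] at h3
    nlinarith [h3]
  have hI : ⟪f' x, u - x⟫ ≤ (f u - f x) + L/2 * θ * N :=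
    (mul_le_mul_iff_right₀ hθpos).mp hcomb
  have hεb : L/2 * θ * N ≤ ε := by
    have h3 : L/2*θ*N ≤ L/2 * (2*ε/(L*N+1)) * N :=
      mul_le_mul_of_nonneg_right (mul_le_mul_of_nonneg_left hθle (by positivity)) hN
    have h4 : L/2 * (2*ε/(L*N+1)) * N = ε * ((L*N)/(L*N+1)) := by ring
    have h5 : (L*N)/(L*N+1) ≤ 1 := (div_le_one hden).mpr (by linarith)
    nlinarith [hε.le]
  linarith

lemma coco {E : Type*} [NormedAddCommGroup E] [InnerProductSpace ℝ E]
    (f : E → ℝ) (f' : E → E) {L : ℝ} (hL : 0 < L)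
    (hconv : ConvexOn ℝ Set.univ f)
    (hsmooth : ∀ x y : E, |f x - f y - ⟪f' y, x - y⟫| ≤ L / 2 * ‖x - y‖ ^ 2)
    (x y : E) : f x + ⟪f' x, y - x⟫ + 1/(2*L) * ‖f' y - f' x‖^2 ≤ f y := by
  set g := f' y - f' x with hg
  set p := y - (1/L) • g with hp
  have h1 := grad_ineq f f' hL hconv hsmooth x p
  have h2 := (abs_le.mp (hsmooth p y)).2
  have hpy : p - y = -((1/L) • g) := by rw [hp]; abel
  have hpx : p - x = (y - x) - (1/L) • g := by rw [hp]; abel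
  rw [hpy] at h2
  have e1 : ⟪f' y, -((1/L) • g)⟫ = -(1/L * ⟪f' y, g⟫) := by
    rw [inner_neg_right, real_inner_smul_right]
  have e2 : ‖-((1/L) • g)‖^2 = (1/L)^2 * ‖g‖^2 := by
    rw [norm_neg, norm_smul, Real.norm_eq_abs, abs_of_pos (by positivity : (0:ℝ) < 1/L), mul_pow]
  rw [e1, e2] at h2
  have e3 : ⟪f' x, p - x⟫ = ⟪f' x, y - x⟫ - 1/L * ⟪f' x, g⟫ := by
    rw [hpx, inner_sub_right, real_inner_smul_right]
  rw [e3] at h1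
  have e4 : ⟪f' y, g⟫ - ⟪f' x, g⟫ = ‖g‖^2 := by
    rw [← inner_sub_left, ← hg, real_inner_self_eq_norm_sq]
  have e5 : L/2 * ((1/L)^2 * ‖g‖^2) = 1/(2*L) * ‖g‖^2 := by
    field_simp
  have e6 : (1:ℝ)/L * ⟪f' y, g⟫ - 1/L * ⟪f' x, g⟫ = 1/L * ‖g‖^2 := by
    rw [← mul_sub, e4]
  have e7 : 1/L * ‖g‖^2 - 1/(2*L) * ‖g‖^2 = 1/(2*L) * ‖g‖^2 := by
    field_simp; ring
  linarith


lemma lip {E : Type*} [NormedAddCommGroup E] [InnerProductSpace ℝ E]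
    (f : E → ℝ) (f' : E → E) {L : ℝ} (hL : 0 < L)
    (hconv : ConvexOn ℝ Set.univ f)
    (hsmooth : ∀ x y : E, |f x - f y - ⟪f' y, x - y⟫| ≤ L / 2 * ‖x - y‖ ^ 2)
    (x y : E) : ‖f' x - f' y‖ ≤ L * ‖x - y‖ := by
  have h1 := coco f f' hL hconv hsmooth x y
  have h2 := coco f f' hL hconv hsmooth y x
  have e0 : ‖f' x - f' y‖ = ‖f' y - f' x‖ := norm_sub_rev _ _
  rw [e0]
  set g := f' y - f' x with hg
  have e1 : ⟪f' x, y - x⟫ + ⟪f' y, x - y⟫ = -⟪g, y - x⟫ := by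
    have h0 : ⟪f' y, x - y⟫ = -⟪f' y, y - x⟫ := by
      rw [← inner_neg_right]; congr 1; abel
    rw [h0, hg, inner_sub_left]
    ring
  have e2 : ‖f' x - f' y‖ = ‖g‖ := by rw [hg]; exact norm_sub_rev _ _
  rw [e2] at h2
  have h3 : 1/L * ‖g‖^2 ≤ ⟪g, y - x⟫ := by
    have hsum := add_le_add h1 h2
    have e3 : 1/(2*L) * ‖g‖^2 + 1/(2*L) * ‖g‖^2 = 1/L * ‖g‖^2 := by field_simp; ring
    linarith [hsum, e1, e3]
  have h4 : ⟪g, y - x⟫ ≤ ‖g‖ * ‖y - x‖ := real_inner_le_norm g (y - x)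
  have e5 : ‖y - x‖ = ‖x - y‖ := norm_sub_rev _ _
  rcases ((norm_nonneg g).eq_or_lt).imp Eq.symm id with h | h
  · rw [h]; positivity
  · rw [e5] at h4
    have h6 := mul_le_mul_of_nonneg_left (h3.trans h4) hL.le
    have h7 : L * (1/L * ‖g‖^2) = ‖g‖^2 := by field_simp
    rw [h7] at h6
    nlinarith [h6, h]

lemma strong_min {E : Type*} [NormedAddCommGroup E] [InnerProductSpace ℝ E]
    {α : ℝ} (hα : 0 < α) {Ω : Set E} (hΩ : StronglyConvexSet α Ω)
    {g : E} (hg : 0 < ‖g‖) {vv : E} (hv : vv ∈ Ω)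
    (hmin : ∀ u ∈ Ω, ⟪g, vv⟫ ≤ ⟪g, u⟫) {u : E} (hu : u ∈ Ω) :
    α/2 * ‖g‖ * ‖u - vv‖^2 ≤ ⟪g, u⟫ - ⟪g, vv⟫ := by
  set A := α/2 * ‖g‖ * ‖u - vv‖^2 with hA
  have hA0 : 0 ≤ A := by positivity
  refine le_of_forall_pos_le_add fun ε hε => ?_
  set θ : ℝ := min 1 (ε/(A+1)) with hθdef
  have hθpos : 0 < θ := lt_min one_pos (by positivity)
  have hθ1 : θ ≤ 1 := min_le_left _ _
  have hθle : θ ≤ ε/(A+1) := min_le_right _ _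
  have h1θ : (0:ℝ) ≤ 1 - θ := by linarith
  set coef : ℝ := θ*(1-θ)*(α/2)*‖u - vv‖^2 with hcoef
  have hcoef0 : 0 ≤ coef :=
    mul_nonneg (mul_nonneg (mul_nonneg hθpos.le h1θ) (by positivity)) (by positivity)
  set y : E := θ•u + (1-θ)•vv - (coef/‖g‖)•g with hy
  have hmem : y ∈ Ω := by
    refine hΩ u hu vv hv θ ⟨hθpos.le, hθ1⟩ y ?_
    have hd : y - (θ•u + (1-θ)•vv) = -((coef/‖g‖)•g) := by rw [hy]; abel
    rw [hd, norm_neg, norm_smul, Real.norm_eq_abs, abs_of_nonneg (div_nonneg hcoef0 hg.le),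
      div_mul_cancel₀ _ hg.ne']
  have hyineq := hmin y hmem
  have hinner : ⟪g, y⟫ = θ*⟪g,u⟫ + (1-θ)*⟪g,vv⟫ - coef*‖g‖ := by
    rw [hy, inner_sub_right, inner_add_right, real_inner_smul_right, real_inner_smul_right,
      real_inner_smul_right, real_inner_self_eq_norm_sq]
    have : coef/‖g‖*‖g‖^2 = coef*‖g‖ := by
      field_simp
    rw [this]
  rw [hinner] at hyineq
  -- θ(1-θ)A ≤ θ(⟪g,u⟫-⟪g,vv⟫)
  have hkey : θ*((1-θ)*A) ≤ θ*(⟪g,u⟫ - ⟪g,vv⟫) := by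
    have e1 : coef*‖g‖ = θ*((1-θ)*A) := by rw [hcoef, hA]; ring
    nlinarith [hyineq, e1]
  have hkey2 : (1-θ)*A ≤ ⟪g,u⟫ - ⟪g,vv⟫ := (mul_le_mul_iff_right₀ hθpos).mp hkey
  have hθA : θ*A ≤ ε := by
    have h2 : θ*(A+1) ≤ ε := (le_div_iff₀ (by positivity)).mp hθle
    nlinarith [hθpos.le]
  nlinarith [hkey2, hθA]

set_option maxHeartbeats 2000000 in
/-- `O(1/t²)` rate for Primal Averaging with the most-recent-gradient oracle (option (B))
over a compact `α`-strongly convex set of diameter at most `D`, when gradient norms along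
the accelerating sequence are bounded below by `c > 0`:
`f(w_t) − f(w*) ≤ (2L/(t(t+1)))·D²·(1 + 36L²/(α²c²))`. -/
theorem primal_averaging_optionB_O_inv_t_sq
    {E : Type*} [NormedAddCommGroup E] [InnerProductSpace ℝ E]
    {α : ℝ} (hα : 0 < α) {Ω : Set E} (hne : Ω.Nonempty) (hcomp : IsCompact Ω)
    (hΩ : StronglyConvexSet α Ω)
    {D : ℝ} (hdiam : ∀ u ∈ Ω, ∀ v ∈ Ω, ‖u - v‖ ≤ D)
    (f : E → ℝ) (f' : E → E) {L : ℝ} (hL : 0 < L)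
    (hconv : ConvexOn ℝ Set.univ f)
    (hdiff : ∀ x : E, HasFDerivAt f (innerSL ℝ (f' x)) x)
    (hsmooth : ∀ x y : E, |f x - f y - ⟪f' y, x - y⟫| ≤ L / 2 * ‖x - y‖ ^ 2)
    (w v z : ℕ → E)
    (hw0 : w 0 = v 0) (hv0 : v 0 ∈ Ω)
    (hz : ∀ t : ℕ, 1 ≤ t →
      z (t - 1) = (1 - 2 / ((t : ℝ) + 1)) • w (t - 1) + (2 / ((t : ℝ) + 1)) • v (t - 1))
    (hvmem : ∀ t : ℕ, 1 ≤ t → v t ∈ Ω)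
    (horacle : ∀ t : ℕ, 1 ≤ t → ∀ u ∈ Ω,
      ⟪f' (z (t - 1)), v t⟫ ≤ ⟪f' (z (t - 1)), u⟫)
    (hw : ∀ t : ℕ, 1 ≤ t →
      w t = (1 - 2 / ((t : ℝ) + 1)) • w (t - 1) + (2 / ((t : ℝ) + 1)) • v t)
    {c : ℝ} (hc : 0 < c) (hgrad : ∀ t : ℕ, c ≤ ‖f' (z t)‖) :
    ∀ wstar ∈ Ω, ∀ t : ℕ, 1 ≤ t →
      f (w t) - f wstar ≤
        2 * L / ((t : ℝ) * ((t : ℝ) + 1)) * D ^ 2 * (1 + 36 * L ^ 2 / (α ^ 2 * c ^ 2)) := by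
  intro wstar hwstar t ht
  obtain ⟨x0, hx0⟩ := hne
  have hD0 : (0:ℝ) ≤ D := by simpa using hdiam x0 hx0 x0 hx0
  have hαc : (0:ℝ) < α * c := mul_pos hα hc
  set K := 36 * L ^ 2 / (α ^ 2 * c ^ 2) with hK
  have hK0 : (0:ℝ) ≤ K := by rw [hK]; positivity
  have hΩconv : Convex ℝ Ω := by
    intro p hp q hq a b ha hb hab
    refine hΩ p hp q hq a ⟨ha, by linarith⟩ _ ?_
    rw [show b = 1 - a by linarith]
    simp only [sub_self, norm_zero]
    exact mul_nonneg (mul_nonneg (mul_nonneg ha (by linarith)) (by positivity)) (by positivity)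
  have hvΩ : ∀ s : ℕ, v s ∈ Ω := by
    intro s
    cases s with
    | zero => exact hv0
    | succ n => exact hvmem (n+1) (by omega)
  have hz' : ∀ n : ℕ, z n = (1 - 2/((n:ℝ)+2)) • w n + (2/((n:ℝ)+2)) • v n := by
    intro n
    have h := hz (n+1) (by omega)
    simp only [Nat.add_sub_cancel] at h
    have hc1 : ((n+1:ℕ):ℝ) + 1 = (n:ℝ) + 2 := by push_cast; ring
    rw [hc1] at h
    exact h
  have hw' : ∀ n : ℕ, w (n+1) = (1 - 2/((n:ℝ)+2)) • w n + (2/((n:ℝ)+2)) • v (n+1) := by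
    intro n
    have h := hw (n+1) (by omega)
    simp only [Nat.add_sub_cancel] at h
    have hc1 : ((n+1:ℕ):ℝ) + 1 = (n:ℝ) + 2 := by push_cast; ring
    rw [hc1] at h
    exact h
  have hgam_pos : ∀ n:ℕ, (0:ℝ) < 2/((n:ℝ)+2) := fun n => by positivity
  have hgam_le : ∀ n:ℕ, 2/((n:ℝ)+2) ≤ 1 := by
    intro n
    rw [div_le_one (by positivity)]
    have : (0:ℝ) ≤ (n:ℝ) := Nat.cast_nonneg n
    linarith
  have hwΩ : ∀ s : ℕ, w s ∈ Ω := by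
    intro s
    induction s with
    | zero => rw [hw0]; exact hv0
    | succ n ih =>
      rw [hw' n]
      exact hΩconv ih (hvΩ (n+1)) (by linarith [hgam_le n]) (hgam_pos n).le (by ring)
  have hgi : ∀ x u : E, f x + ⟪f' x, u - x⟫ ≤ f u := grad_ineq f f' hL hconv hsmooth
  have hlip : ∀ x y : E, ‖f' x - f' y‖ ≤ L * ‖x - y‖ := lip f f' hL hconv hsmooth
  -- per-step inequality
  have hstep : ∀ n : ℕ, f (w (n+1)) - f wstar ≤
      (1 - 2/((n:ℝ)+2)) * (f (w n) - f wstar)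
        + L/2 * (2/((n:ℝ)+2))^2 * ‖v (n+1) - v n‖^2 := by
    intro n
    have hzn := hz' n
    have hwn := hw' n
    have hsm := (abs_le.mp (hsmooth (w (n+1)) (z n))).2
    have hdec : w (n+1) - z n
        = (1-2/((n:ℝ)+2)) • (w n - z n) + (2/((n:ℝ)+2)) • (v (n+1) - z n) := by
      rw [hwn]; module
    have hdiffeq : w (n+1) - z n = (2/((n:ℝ)+2)) • (v (n+1) - v n) := by
      rw [hwn, hzn]; module
    have hnormeq : ‖w (n+1) - z n‖^2 = (2/((n:ℝ)+2))^2 * ‖v (n+1) - v n‖^2 := by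
      rw [hdiffeq, norm_smul, Real.norm_eq_abs, abs_of_pos (hgam_pos n), mul_pow]
    have hinner : ⟪f' (z n), w (n+1) - z n⟫
        = (1-2/((n:ℝ)+2))*⟪f' (z n), w n - z n⟫ + (2/((n:ℝ)+2))*⟪f' (z n), v (n+1) - z n⟫ := by
      rw [hdec, inner_add_right, real_inner_smul_right, real_inner_smul_right]
    have key1 : f (z n) + ⟪f' (z n), w n - z n⟫ ≤ f (w n) := hgi (z n) (w n)
    have key2 : f (z n) + ⟪f' (z n), wstar - z n⟫ ≤ f wstar := hgi (z n) wstar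
    have key3 : ⟪f' (z n), v (n+1)⟫ ≤ ⟪f' (z n), wstar⟫ := by
      have h := horacle (n+1) (by omega) wstar hwstar
      simpa only [Nat.add_sub_cancel] using h
    have key4 : ⟪f' (z n), v (n+1) - z n⟫
        = ⟪f' (z n), wstar - z n⟫ + (⟪f' (z n), v (n+1)⟫ - ⟪f' (z n), wstar⟫) := by
      rw [inner_sub_right, inner_sub_right]; ring
    have e1 : (1-2/((n:ℝ)+2))*(f (z n) + ⟪f' (z n), w n - z n⟫) ≤ (1-2/((n:ℝ)+2))*f (w n) :=
      mul_le_mul_of_nonneg_left key1 (by linarith [hgam_le n])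
    have e2 : (2/((n:ℝ)+2))*(f (z n) + ⟪f' (z n), v (n+1) - z n⟫) ≤ (2/((n:ℝ)+2))*(f wstar) := by
      apply mul_le_mul_of_nonneg_left _ (hgam_pos n).le
      rw [key4]; linarith [key2, key3]
    nlinarith [hsm, hinner, hnormeq, e1, e2]
  -- bound on consecutive z's
  have hΔz : ∀ m:ℕ, ‖z (m+1) - z m‖ ≤ 6*D/((m:ℝ)+2) := by
    intro m
    have t1 : ‖z (m+1) - w (m+1)‖ ≤ (2/((m:ℝ)+2)) * D := by
      have e : z (m+1) - w (m+1) = (2/((((m+1):ℕ):ℝ)+2)) • (v (m+1) - w (m+1)) := by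
        rw [hz' (m+1)]; module
      rw [e, norm_smul, Real.norm_eq_abs, abs_of_pos (hgam_pos (m+1))]
      have hb : 2/(((m+1:ℕ):ℝ)+2) ≤ 2/((m:ℝ)+2) := by
        have h1 : ((m:ℝ)+2) ≤ (((m+1:ℕ):ℝ)+2) := by push_cast; linarith
        gcongr
      exact mul_le_mul hb (hdiam _ (hvΩ (m+1)) _ (hwΩ (m+1))) (norm_nonneg _) (by positivity)
    have t2 : ‖w (m+1) - w m‖ ≤ (2/((m:ℝ)+2)) * D := by
      have e : w (m+1) - w m = (2/((m:ℝ)+2)) • (v (m+1) - w m) := by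
        rw [hw' m]; module
      rw [e, norm_smul, Real.norm_eq_abs, abs_of_pos (hgam_pos m)]
      exact mul_le_mul_of_nonneg_left (hdiam _ (hvΩ (m+1)) _ (hwΩ m)) (hgam_pos m).le
    have t3 : ‖w m - z m‖ ≤ (2/((m:ℝ)+2)) * D := by
      have e : w m - z m = -((2/((m:ℝ)+2)) • (v m - w m)) := by
        rw [hz' m]; module
      rw [e, norm_neg, norm_smul, Real.norm_eq_abs, abs_of_pos (hgam_pos m)]
      exact mul_le_mul_of_nonneg_left (hdiam _ (hvΩ m) _ (hwΩ m)) (hgam_pos m).le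
    have tri : ‖z (m+1) - z m‖ ≤ ‖z (m+1) - w (m+1)‖ + ‖w (m+1) - w m‖ + ‖w m - z m‖ := by
      have e : z (m+1) - z m = (z (m+1) - w (m+1)) + (w (m+1) - w m) + (w m - z m) := by abel
      rw [e]; exact norm_add₃_le
    have efin : 3*((2/((m:ℝ)+2))*D) = 6*D/((m:ℝ)+2) := by ring
    linarith [tri, t1, t2, t3]
  -- bound on consecutive v's
  have hΔv : ∀ m:ℕ, ‖v (m+2) - v (m+1)‖ ≤ L/(α*c) * ‖z (m+1) - z m‖ := by
    intro m
    have hg2 : 0 < ‖f' (z (m+1))‖ := lt_of_lt_of_le hc (hgrad (m+1))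
    have hg1 : 0 < ‖f' (z m)‖ := lt_of_lt_of_le hc (hgrad m)
    have hmin2 : ∀ p ∈ Ω, ⟪f' (z (m+1)), v (m+2)⟫ ≤ ⟪f' (z (m+1)), p⟫ := by
      intro p hp
      have h := horacle (m+2) (by omega) p hp
      simpa only [show m+2-1 = m+1 by omega] using h
    have hmin1 : ∀ p ∈ Ω, ⟪f' (z m), v (m+1)⟫ ≤ ⟪f' (z m), p⟫ := by
      intro p hp
      have h := horacle (m+1) (by omega) p hp
      simpa only [Nat.add_sub_cancel] using h
    have s1 := strong_min hα hΩ hg2 (hvΩ (m+2)) hmin2 (hvΩ (m+1))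
    have s2 := strong_min hα hΩ hg1 (hvΩ (m+1)) hmin1 (hvΩ (m+2))
    have hnrev : ‖v (m+1) - v (m+2)‖ = ‖v (m+2) - v (m+1)‖ := norm_sub_rev _ _
    rw [hnrev] at s1
    have e1 : ⟪f' (z (m+1)), v (m+1)⟫ - ⟪f' (z (m+1)), v (m+2)⟫
        = -⟪f' (z (m+1)), v (m+2) - v (m+1)⟫ := by
      rw [inner_sub_right]; ring
    have e2 : ⟪f' (z m), v (m+2)⟫ - ⟪f' (z m), v (m+1)⟫ = ⟪f' (z m), v (m+2) - v (m+1)⟫ := by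
      rw [inner_sub_right]
    rw [e1] at s1
    rw [e2] at s2
    have hCS : ⟪f' (z m) - f' (z (m+1)), v (m+2) - v (m+1)⟫
        ≤ ‖f' (z m) - f' (z (m+1))‖ * ‖v (m+2) - v (m+1)‖ := real_inner_le_norm _ _
    have hsum : α*c*‖v (m+2) - v (m+1)‖^2 ≤ ⟪f' (z m) - f' (z (m+1)), v (m+2) - v (m+1)⟫ := by
      rw [inner_sub_left]
      have b1 : (α/2*c)*‖v (m+2) - v (m+1)‖^2 ≤ (α/2*‖f' (z m)‖)*‖v (m+2) - v (m+1)‖^2 :=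
        mul_le_mul_of_nonneg_right
          (mul_le_mul_of_nonneg_left (hgrad m) (by linarith)) (sq_nonneg _)
      have b2 : (α/2*c)*‖v (m+2) - v (m+1)‖^2 ≤ (α/2*‖f' (z (m+1))‖)*‖v (m+2) - v (m+1)‖^2 :=
        mul_le_mul_of_nonneg_right
          (mul_le_mul_of_nonneg_left (hgrad (m+1)) (by linarith)) (sq_nonneg _)
      linarith [s1, s2, b1, b2]
    have hzlip : ‖f' (z m) - f' (z (m+1))‖ ≤ L * ‖z (m+1) - z m‖ := by
      have h := hlip (z m) (z (m+1))
      rw [norm_sub_rev (z m) (z (m+1))] at h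
      exact h
    rcases ((norm_nonneg (v (m+2) - v (m+1))).eq_or_lt).imp Eq.symm id with h0 | h0
    · rw [h0]; positivity
    · have hs2 : α*c*‖v (m+2) - v (m+1)‖^2 ≤ L * ‖z (m+1) - z m‖ * ‖v (m+2) - v (m+1)‖ := by
        calc α*c*‖v (m+2) - v (m+1)‖^2
            ≤ ⟪f' (z m) - f' (z (m+1)), v (m+2) - v (m+1)⟫ := hsum
          _ ≤ ‖f' (z m) - f' (z (m+1))‖ * ‖v (m+2) - v (m+1)‖ := hCS
          _ ≤ L * ‖z (m+1) - z m‖ * ‖v (m+2) - v (m+1)‖ :=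
              mul_le_mul_of_nonneg_right hzlip (norm_nonneg _)
      rw [div_mul_eq_mul_div, le_div_iff₀ hαc]
      have hs3 : ‖v (m+2) - v (m+1)‖*(α*c)*‖v (m+2) - v (m+1)‖
          ≤ L*‖z (m+1) - z m‖*‖v (m+2) - v (m+1)‖ := by
        have e : ‖v (m+2) - v (m+1)‖*(α*c)*‖v (m+2) - v (m+1)‖ = α*c*‖v (m+2) - v (m+1)‖^2 := by
          ring
        rw [e]; exact hs2
      exact le_of_mul_le_mul_right hs3 h0
  -- main induction
  have claim : ∀ n:ℕ, ((n:ℝ)+1)*((n:ℝ)+2)*(f (w (n+1)) - f wstar)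
      ≤ 2*L*D^2*(1 + K*(1 - 1/((n:ℝ)+1))) := by
    intro n
    induction n with
    | zero =>
      have h0 := hstep 0
      norm_num at h0 ⊢
      have hd1 : ‖v 1 - v 0‖ ≤ D := hdiam _ (hvΩ 1) _ (hvΩ 0)
      have hd2 : ‖v 1 - v 0‖^2 ≤ D^2 := by nlinarith [norm_nonneg (v 1 - v 0)]
      nlinarith [h0, hd2, hL.le, hD0, mul_nonneg hL.le (sq_nonneg D)]
    | succ n ih =>
      have hs := hstep (n+1)
      simp only [show n+1+1 = n+2 from rfl] at hs ⊢
      push_cast at hs ⊢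
      have hnr0 : (0:ℝ) ≤ (n:ℝ) := Nat.cast_nonneg n
      have hr : ‖v (n+2) - v (n+1)‖ ≤ L/(α*c) * (6*D/((n:ℝ)+2)) :=
        (hΔv n).trans (mul_le_mul_of_nonneg_left (hΔz n) (by positivity))
      have hr0 : (0:ℝ) ≤ ‖v (n+2) - v (n+1)‖ := norm_nonneg _
      have hr2 : ‖v (n+2) - v (n+1)‖^2 ≤ (L/(α*c))^2 * (36*D^2/((n:ℝ)+2)^2) := by
        have hsq := mul_self_le_mul_self hr0 hr
        calc ‖v (n+2) - v (n+1)‖^2 = ‖v (n+2) - v (n+1)‖*‖v (n+2) - v (n+1)‖ := by ring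
          _ ≤ (L/(α*c) * (6*D/((n:ℝ)+2))) * (L/(α*c) * (6*D/((n:ℝ)+2))) := hsq
          _ = (L/(α*c))^2 * (36*D^2/((n:ℝ)+2)^2) := by
              have hne2 : ((n:ℝ)+2) ≠ 0 := by positivity
              field_simp
              ring
      have hM : (0:ℝ) < ((n:ℝ)+2)*((n:ℝ)+3) := by positivity
      have hA := mul_le_mul_of_nonneg_left hs hM.le
      have eA : ((n:ℝ)+2)*((n:ℝ)+3)*((1 - 2/((n:ℝ)+1+2))*(f (w (n+1)) - f wstar)
            + L/2*(2/((n:ℝ)+1+2))^2*‖v (n+2) - v (n+1)‖^2)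
          = ((n:ℝ)+1)*((n:ℝ)+2)*(f (w (n+1)) - f wstar)
            + 2*L*(((n:ℝ)+2)/((n:ℝ)+3))*‖v (n+2) - v (n+1)‖^2 := by
        have h3 : ((n:ℝ)+3) ≠ 0 := by positivity
        field_simp
        ring
      have eB : 2*L*(((n:ℝ)+2)/((n:ℝ)+3))*‖v (n+2) - v (n+1)‖^2
          ≤ 2*L*‖v (n+2) - v (n+1)‖^2 := by
        have hq : ((n:ℝ)+2)/((n:ℝ)+3) ≤ 1 := by
          rw [div_le_one (by positivity)]; linarith
        linarith [mul_le_mul_of_nonneg_right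
          (mul_le_mul_of_nonneg_left hq (by positivity : (0:ℝ) ≤ 2*L))
          (sq_nonneg ‖v (n+2) - v (n+1)‖)]
      have eC : 2*L*‖v (n+2) - v (n+1)‖^2 ≤ 2*L*((L/(α*c))^2 * (36*D^2/((n:ℝ)+2)^2)) :=
        mul_le_mul_of_nonneg_left hr2 (by positivity)
      have eD : 2*L*((L/(α*c))^2 * (36*D^2/((n:ℝ)+2)^2)) = 2*L*D^2*K * (1/((n:ℝ)+2)^2) := by
        rw [hK]; field_simp
      have eE : 1/(((n:ℝ)+2)^2) ≤ 1/((n:ℝ)+1) - 1/((n:ℝ)+2) := by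
        have e : 1/((n:ℝ)+1) - 1/((n:ℝ)+2) = 1/(((n:ℝ)+1)*((n:ℝ)+2)) := by
          field_simp
          ring
        rw [e]
        apply one_div_le_one_div_of_le (by positivity)
        nlinarith
      have eF : (0:ℝ) ≤ 2*L*D^2*K := mul_nonneg (by positivity) hK0
      have eG := mul_le_mul_of_nonneg_left eE eF
      have c1 : ((n:ℝ)+2)*((n:ℝ)+3)*(f (w (n+2)) - f wstar)
          ≤ ((n:ℝ)+1)*((n:ℝ)+2)*(f (w (n+1)) - f wstar)
            + 2*L*(((n:ℝ)+2)/((n:ℝ)+3))*‖v (n+2) - v (n+1)‖^2 := by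
        rw [← eA]; exact hA
      have c2 : ((n:ℝ)+2)*((n:ℝ)+3)*(f (w (n+2)) - f wstar)
          ≤ 2*L*D^2*(1 + K*(1 - 1/((n:ℝ)+1)))
            + 2*L*D^2*K*(1/((n:ℝ)+1) - 1/((n:ℝ)+2)) := by
        linarith [c1, ih, eB, eC, eD, eG]
      have c3 : 2*L*D^2*(1 + K*(1 - 1/((n:ℝ)+1))) + 2*L*D^2*K*(1/((n:ℝ)+1) - 1/((n:ℝ)+2))
          = 2*L*D^2*(1 + K*(1 - 1/((n:ℝ)+2))) := by ring
      have g1 : ((n:ℝ)+1+1) = ((n:ℝ)+2) := by ring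
      have g2 : ((n:ℝ)+1+2) = ((n:ℝ)+3) := by ring
      rw [g1, g2]
      linarith [c2, c3]
  -- conclude
  obtain ⟨n, rfl⟩ : ∃ n, t = n+1 := ⟨t-1, by omega⟩
  have hcl := claim n
  have h1 : K*(1 - 1/((n:ℝ)+1)) ≤ K := by
    have h2 : (0:ℝ) ≤ K * (1/((n:ℝ)+1)) := mul_nonneg hK0 (by positivity)
    nlinarith [h2]
  have h2 : ((n:ℝ)+1)*((n:ℝ)+2)*(f (w (n+1)) - f wstar) ≤ 2*L*D^2*(1+K) := by
    nlinarith [hcl, h1, mul_nonneg (mul_nonneg (by positivity : (0:ℝ) ≤ 2*L) (sq_nonneg D)) hK0,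
      (by positivity : (0:ℝ) ≤ 2*L*D^2)]
  have goal' : f (w (n+1)) - f wstar ≤ 2*L*D^2*(1+K)/(((n:ℝ)+1)*(((n:ℝ)+1)+1)) := by
    rw [le_div_iff₀ (by positivity)]
    nlinarith [h2]
  have ecast : (2:ℝ)*L/((((n+1:ℕ)):ℝ)*(((n+1:ℕ):ℝ)+1))*D^2*(1+K)
      = 2*L*D^2*(1+K)/(((n:ℝ)+1)*(((n:ℝ)+1)+1)) := by
    push_cast; ring
  rw [ecast]
  exact goal'
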